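/- For any nonnegative measurable function g: ℝ_{≥0} → ℝ_{≥0} such that the integrals exist, the function ψ_g(μ) = ∫_{ℝ^n} e^{-y^T Σ(μ) y} g(y^T y) dy is a positive definite semigroup function on probability measures: Σ_{i,j} c_i c_j ψ_g(μ_i + μ_j) ≥ 0 for all finite families, provided Σ(μ_i + μ_j) is positive definite for all pairs. -/

import Mathlib

open Finset Matrix MeasureTheory

noncomputable def meanVec {n : ℕ} (μ : (Fin n → ℝ) →₀ ℝ) : Fin n → ℝ :=
  fun i => ∑ p ∈ μ.support, μ p * p i

noncomputable def varMat {n : ℕ} (μ : (Fin n → ℝ) →₀ ℝ) : Matrix (Fin n) (Fin n) ℝ :=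
  Matrix.of fun i j =>
    (∑ p ∈ μ.support, μ p * p i * p j) - meanVec μ i * meanVec μ j

/-- ψ_g(μ) = ∫ e^{-yᵀ Σ(μ) y} g(yᵀy) dy. -/
noncomputable def psiG {n : ℕ} (g : ℝ → ℝ) (μ : (Fin n → ℝ) →₀ ℝ) : ℝ :=
  ∫ y : Fin n → ℝ, Real.exp (-(y ⬝ᵥ (varMat μ).mulVec y)) * g (y ⬝ᵥ y)

/-- Exponential of a rank-one product kernel is positive semidefinite
(via the power series expansion of `exp`). -/
lemma key_psd {k : ℕ} (e x : Fin k → ℝ) :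
    0 ≤ ∑ i, ∑ j, e i * e j * Real.exp (x i * x j) := by
  have hexp : ∀ i j : Fin k, e i * e j * Real.exp (x i * x j)
      = ∑' m : ℕ, e i * e j * ((x i * x j) ^ m / m.factorial) := by
    intro i j
    rw [Real.exp_eq_exp_ℝ, NormedSpace.exp_eq_tsum_div, tsum_mul_left]
  have hsummable : ∀ i j : Fin k,
      Summable (fun m : ℕ => e i * e j * ((x i * x j) ^ m / m.factorial)) :=
    fun i j => (Real.summable_pow_div_factorial (x i * x j)).mul_left _
  calc (0:ℝ) ≤ ∑' m : ℕ, ∑ i, ∑ j, e i * e j * ((x i * x j) ^ m / m.factorial) := by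
        apply tsum_nonneg
        intro m
        have h : ∑ i, ∑ j, e i * e j * ((x i * x j) ^ m / m.factorial)
            = (∑ i, e i * x i ^ m) ^ 2 / m.factorial := by
          rw [sq, Finset.sum_mul_sum, Finset.sum_div]
          refine Finset.sum_congr rfl fun i _ => ?_
          rw [Finset.sum_div]
          refine Finset.sum_congr rfl fun j _ => ?_
          rw [mul_pow]; ring
        rw [h]
        positivity
    _ = ∑ i, ∑ j, e i * e j * Real.exp (x i * x j) := by
        rw [Summable.tsum_finsetSum (fun i _ => summable_sum (fun j _ => hsummable i j))]
        exact Finset.sum_congr rfl fun i _ => by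
          rw [Summable.tsum_finsetSum (fun j _ => hsummable i j)]
          exact Finset.sum_congr rfl fun j _ => (hexp i j).symm

lemma finsupp_sum_add {n : ℕ} (μ ν : (Fin n → ℝ) →₀ ℝ) (f : (Fin n → ℝ) → ℝ) :
    ∑ p ∈ (μ + ν).support, (μ + ν) p * f p
      = ∑ p ∈ μ.support, μ p * f p + ∑ p ∈ ν.support, ν p * f p := by
  have : ∀ ρ : (Fin n → ℝ) →₀ ℝ, ∑ p ∈ ρ.support, ρ p * f p = ρ.sum (fun p v => v * f p) :=
    fun ρ => rfl
  rw [this, this, this, Finsupp.sum_add_index' (by simp) (by intros; ring)]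

lemma meanVec_add {n : ℕ} (μ ν : (Fin n → ℝ) →₀ ℝ) (i : Fin n) :
    meanVec (μ + ν) i = meanVec μ i + meanVec ν i :=
  finsupp_sum_add μ ν (fun p => p i)

lemma varMat_add {n : ℕ} (μ ν : (Fin n → ℝ) →₀ ℝ) (i j : Fin n) :
    varMat (μ + ν) i j = varMat μ i j + varMat ν i j
      - (meanVec μ i * meanVec ν j + meanVec ν i * meanVec μ j) := by
  have h : ∀ ρ : (Fin n → ℝ) →₀ ℝ,
      ∑ p ∈ ρ.support, ρ p * p i * p j = ∑ p ∈ ρ.support, ρ p * (p i * p j) := by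
    intro ρ; exact Finset.sum_congr rfl fun p _ => by ring
  simp only [varMat, Matrix.of_apply, h, finsupp_sum_add μ ν (fun p => p i * p j),
    meanVec_add]
  ring

lemma quad_expand {n : ℕ} (M : Matrix (Fin n) (Fin n) ℝ) (y : Fin n → ℝ) :
    y ⬝ᵥ M.mulVec y = ∑ i, ∑ j, y i * M i j * y j := by
  simp only [dotProduct, mulVec, Finset.mul_sum]
  exact Finset.sum_congr rfl fun i _ => Finset.sum_congr rfl fun j _ => by ring

lemma quad_add {n : ℕ} (μ ν : (Fin n → ℝ) →₀ ℝ) (y : Fin n → ℝ) :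
    y ⬝ᵥ (varMat (μ + ν)).mulVec y
      = y ⬝ᵥ (varMat μ).mulVec y + y ⬝ᵥ (varMat ν).mulVec y
        - 2 * (meanVec μ ⬝ᵥ y) * (meanVec ν ⬝ᵥ y) := by
  have h1 : ∀ a b : Fin n → ℝ, ∑ i, ∑ j, y i * (a i * b j) * y j = (a ⬝ᵥ y) * (b ⬝ᵥ y) := by
    intro a b
    rw [dotProduct, dotProduct, Finset.sum_mul_sum]
    exact Finset.sum_congr rfl fun i _ => Finset.sum_congr rfl fun j _ => by ring
  have hc : ∑ i, ∑ j, y i * (meanVec μ i * meanVec ν j + meanVec ν i * meanVec μ j) * y j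
      = 2 * (meanVec μ ⬝ᵥ y) * (meanVec ν ⬝ᵥ y) := by
    have h2 : ∀ i j : Fin n, y i * (meanVec μ i * meanVec ν j + meanVec ν i * meanVec μ j) * y j
        = y i * (meanVec μ i * meanVec ν j) * y j + y i * (meanVec ν i * meanVec μ j) * y j :=
      fun i j => by ring
    simp only [h2, Finset.sum_add_distrib, h1]
    ring
  rw [quad_expand, quad_expand, quad_expand, ← hc, ← Finset.sum_add_distrib,
    ← Finset.sum_sub_distrib]
  refine Finset.sum_congr rfl fun i _ => ?_
  rw [← Finset.sum_add_distrib, ← Finset.sum_sub_distrib]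
  refine Finset.sum_congr rfl fun j _ => ?_
  rw [varMat_add]
  ring

/-- ψ_g is a positive definite semigroup function on probability measures. -/
theorem psiG_ssppd {n k : ℕ} (g : ℝ → ℝ) (hg_meas : Measurable g)
    (hg_nonneg : ∀ x, 0 ≤ x → 0 ≤ g x)
    (μ : Fin k → ((Fin n → ℝ) →₀ ℝ))
    (hpos : ∀ i p, 0 ≤ μ i p) (hprob : ∀ i, ∑ p ∈ (μ i).support, μ i p = 1)
    (hpd : ∀ i j, (varMat (μ i + μ j)).PosDef)
    (hint : ∀ i j, Integrable
      (fun y : Fin n → ℝ =>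
        Real.exp (-(y ⬝ᵥ (varMat (μ i + μ j)).mulVec y)) * g (y ⬝ᵥ y)))
    (c : Fin k → ℝ) :
    0 ≤ ∑ i, ∑ j, c i * c j * psiG g (μ i + μ j) := by
  have hpt : ∀ y : Fin n → ℝ, 0 ≤ ∑ i, ∑ j, c i * c j *
      (Real.exp (-(y ⬝ᵥ (varMat (μ i + μ j)).mulVec y)) * g (y ⬝ᵥ y)) := by
    intro y
    have hg : 0 ≤ g (y ⬝ᵥ y) :=
      hg_nonneg _ (Finset.sum_nonneg fun i _ => mul_self_nonneg (y i))
    set a : Fin k → ℝ := fun i => y ⬝ᵥ (varMat (μ i)).mulVec y with ha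
    set b : Fin k → ℝ := fun i => meanVec (μ i) ⬝ᵥ y with hb
    set e : Fin k → ℝ := fun i => c i * Real.exp (-a i) with he
    set x : Fin k → ℝ := fun i => Real.sqrt 2 * b i with hx
    have hone : ∀ i j, c i * c j *
        (Real.exp (-(y ⬝ᵥ (varMat (μ i + μ j)).mulVec y)) * g (y ⬝ᵥ y))
        = (e i * e j * Real.exp (x i * x j)) * g (y ⬝ᵥ y) := by
      intro i j
      have h2 : x i * x j = 2 * b i * b j := by
        simp only [hx]
        rw [show Real.sqrt 2 * b i * (Real.sqrt 2 * b j)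
            = (Real.sqrt 2 * Real.sqrt 2) * (b i * b j) by ring,
          Real.mul_self_sqrt (by norm_num : (0:ℝ) ≤ 2)]
        ring
      have h3 : -(y ⬝ᵥ (varMat (μ i + μ j)).mulVec y) = (-a i) + ((-a j) + x i * x j) := by
        rw [quad_add, h2]; simp only [ha, hb]; ring
      rw [h3, Real.exp_add, Real.exp_add]
      simp only [he]
      ring
    calc (0:ℝ) ≤ (∑ i, ∑ j, e i * e j * Real.exp (x i * x j)) * g (y ⬝ᵥ y) :=
          mul_nonneg (key_psd e x) hg
      _ = ∑ i, ∑ j, c i * c j *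
          (Real.exp (-(y ⬝ᵥ (varMat (μ i + μ j)).mulVec y)) * g (y ⬝ᵥ y)) := by
          rw [Finset.sum_mul]
          exact Finset.sum_congr rfl fun i _ => by
            rw [Finset.sum_mul]
            exact Finset.sum_congr rfl fun j _ => (hone i j).symm
  have h1 : ∀ i j : Fin k, c i * c j * psiG g (μ i + μ j)
      = ∫ y : Fin n → ℝ, c i * c j *
          (Real.exp (-(y ⬝ᵥ (varMat (μ i + μ j)).mulVec y)) * g (y ⬝ᵥ y)) :=
    fun i j => (integral_const_mul _ _).symm
  calc (0:ℝ) ≤ ∫ y : Fin n → ℝ, ∑ i, ∑ j, c i * c j *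
        (Real.exp (-(y ⬝ᵥ (varMat (μ i + μ j)).mulVec y)) * g (y ⬝ᵥ y)) :=
      integral_nonneg hpt
    _ = ∑ i, ∑ j, c i * c j * psiG g (μ i + μ j) := by
      rw [MeasureTheory.integral_finset_sum _
        (fun i _ => integrable_finset_sum _ (fun j _ => (hint i j).const_mul _))]
      refine Finset.sum_congr rfl fun i _ => ?_
      rw [MeasureTheory.integral_finset_sum _ (fun j _ => (hint i j).const_mul _)]
      exact Finset.sum_congr rfl fun j _ => (h1 i j).symm
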